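/- For any words v_1, v_2 ∈ Σ_k^* (possibly empty) and indices i < j, the reduced form of the group word v_1^{-1} s_i^{-1} s_j v_2 has weight exactly 1/2. Consequently, in the order defined by u > v ⇔ w(v^{-1}u) > 0, one has s_i v_2' > s_j v_1' is false and s_i v_1 < s_j v_2 holds for all positive words v_1, v_2; i.e., the order extends the lexicographic order on the free monoid Σ_k^* with s_1 < s_2 < … < s_k. -/

import Mathlib

/-- A letter of the alphabet `Σ_k^±`: `(i, true)` is the positive letter `s_{i+1}`,
`(i, false)` is the negative letter `S_{i+1} = s_{i+1}⁻¹`. -/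
abbrev Letter (k : ℕ) := Fin k × Bool

/-- A word is reduced if no two adjacent letters cancel. -/
def Reduced {k : ℕ} (u : List (Letter k)) : Prop :=
  u.Chain' fun x y => y ≠ (x.1, !x.2)

/-- Contribution of a length-2 factor `xy`:
`+1` if it has the form `s_j S_i` with `j > i`, `-1` if `S_j s_i` with `j > i`, else `0`. -/
def pairVal {k : ℕ} (x y : Letter k) : ℤ :=
  if x.2 = true ∧ y.2 = false ∧ y.1 < x.1 then 1
  else if x.2 = false ∧ y.2 = true ∧ y.1 < x.1 then -1
  else 0

/-- Sum of contributions of all length-2 factors of a word. -/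
def pairSum {k : ℕ} : List (Letter k) → ℤ
  | x :: y :: t => pairVal x y + pairSum (y :: t)
  | _ => 0

/-- `+1/2`, `-1/2`, or `0` according to the last letter. -/
def lastSign {k : ℕ} (u : List (Letter k)) : ℚ :=
  match u.getLast? with
  | none => 0
  | some x => if x.2 then 1/2 else -1/2

/-- The weight function `w` of Šunić's order. -/
def w {k : ℕ} (u : List (Letter k)) : ℚ := pairSum u + lastSign u

/-- for positive words `v₁, v₂ ∈ Σ_k^*` and indices `i < j`, the word
`v₁⁻¹ S_i s_j v₂` (which is already reduced) has weight exactly `1/2`; hence the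
order `u > v ⇔ w (v⁻¹ u) > 0` extends the lexicographic order on `Σ_k^*`
(`s_1 < s_2 < ⋯ < s_k`): `s_i v₁ < s_j v₂` for all positive words `v₁, v₂`. -/
lemma chain'_of_all {α} {R : α → α → Prop} (h : ∀ a b, R a b) : ∀ l : List α, l.Chain' R
  | [] => List.isChain_nil
  | [a] => List.isChain_singleton a
  | a :: b :: t => List.isChain_cons_cons.mpr ⟨h a b, chain'_of_all h (b :: t)⟩

lemma pairSum_neg {k : ℕ} : ∀ (l : List (Fin k)) (c : Fin k) (rest : List (Letter k)),
    pairSum ((l.map fun s => ((s, false) : Letter k)) ++ (c, false) :: rest) =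
      pairSum ((c, false) :: rest)
  | [], _, _ => rfl
  | a :: t, c, rest => by
    cases t with
    | nil =>
        show pairVal (a, false) (c, false) + _ = _
        simp [pairVal]
    | cons a' t' =>
        show pairVal (a, false) (a', false) +
            pairSum ((a' :: t').map (fun s => ((s, false) : Letter k)) ++ (c, false) :: rest) = _
        rw [pairSum_neg (a' :: t') c rest]
        simp [pairVal]

lemma pairSum_pos {k : ℕ} : ∀ (l : List (Fin k)) (c : Fin k),
    pairSum ((c, true) :: l.map fun s => ((s, true) : Letter k)) = 0
  | [], _ => rfl
  | a :: t, c => by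
    show pairVal (c, true) (a, true) + _ = 0
    rw [pairSum_pos t a]
    simp [pairVal]

lemma lastSign_concat {k : ℕ} (l : List (Letter k)) (x : Letter k) :
    lastSign (l ++ [x]) = if x.2 then 1/2 else -1/2 := by
  simp [lastSign, List.getLast?_concat]

lemma lastSign_pos {k : ℕ} (j : Fin k) : ∀ (l : List (Fin k)) (u : List (Letter k)),
    lastSign (u ++ (j, true) :: l.map fun s => ((s, true) : Letter k)) = 1/2 := by
  intro l
  induction l using List.reverseRecOn with
  | nil =>
      intro u
      show lastSign (u ++ [((j, true) : Letter k)]) = 1/2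
      rw [lastSign_concat]
      simp
  | append_singleton t a ih =>
      intro u
      have h : u ++ (j, true) :: (t ++ [a]).map (fun s => ((s, true) : Letter k)) =
          (u ++ (j, true) :: t.map fun s => ((s, true) : Letter k)) ++ [(a, true)] := by
        simp
      rw [h, lastSign_concat]
      simp

theorem stmt4 (k : ℕ) (hk : 2 ≤ k) (i j : Fin k) (hij : i < j)
    (v₁ v₂ : List (Fin k)) :
    Reduced ((v₁.reverse.map fun s => ((s, false) : Letter k)) ++
        [(i, false), (j, true)] ++ v₂.map fun s => ((s, true) : Letter k)) ∧
      w ((v₁.reverse.map fun s => ((s, false) : Letter k)) ++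
        [(i, false), (j, true)] ++ v₂.map fun s => ((s, true) : Letter k)) = 1/2 := by
  constructor
  · rw [Reduced, List.Chain', List.append_assoc, List.isChain_append]
    refine ⟨?_, ?_, ?_⟩
    · rw [List.isChain_map]
      exact chain'_of_all (fun a b => by simp) _
    · rw [show ([(i, false), (j, true)] ++ v₂.map fun s => ((s, true) : Letter k)) =
          (i, false) :: (j, true) :: v₂.map (fun s => ((s, true) : Letter k)) from rfl]
      refine List.isChain_cons_cons.mpr ⟨?_, ?_⟩
      · simp [Fin.ne_of_gt hij]
      · rcases v₂ with _ | ⟨a, t⟩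
        · simp
        · refine List.isChain_cons_cons.mpr ⟨by simp, ?_⟩
          show List.Chain' _ ((a :: t).map fun s => ((s, true) : Letter k))
          rw [List.Chain', List.isChain_map]
          exact chain'_of_all (fun a b => by simp) _
    · intro x hx y hy
      have hx' : x ∈ v₁.reverse.map fun s => ((s, false) : Letter k) :=
        List.mem_of_mem_getLast? hx
      simp only [List.mem_map] at hx'
      obtain ⟨s, _, rfl⟩ := hx'
      simp at hy
      subst hy
      simp
  · have h1 : (v₁.reverse.map fun s => ((s, false) : Letter k)) ++
        [(i, false), (j, true)] ++ v₂.map (fun s => ((s, true) : Letter k)) =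
        (v₁.reverse.map fun s => ((s, false) : Letter k)) ++
        ((i, false) :: (j, true) :: v₂.map fun s => ((s, true) : Letter k)) := by
      simp
    rw [w, h1, pairSum_neg]
    have h2 : pairSum ((i, false) :: (j, true) :: v₂.map fun s => ((s, true) : Letter k)) =
        pairVal (i, false) (j, true) +
          pairSum ((j, true) :: v₂.map fun s => ((s, true) : Letter k)) := rfl
    rw [h2, pairSum_pos, pairVal]
    have : ¬ (j : Fin k) < i := not_lt.mpr hij.le
    simp only [this]
    have h3 : (v₁.reverse.map fun s => ((s, false) : Letter k)) ++
        (i, false) :: (j, true) :: v₂.map (fun s => ((s, true) : Letter k)) =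
        ((v₁.reverse.map fun s => ((s, false) : Letter k)) ++ [(i, false)]) ++
          (j, true) :: v₂.map fun s => ((s, true) : Letter k) := by simp
    rw [h3, lastSign_pos]
    norm_num
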